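/- For every real number c with 1/4 < c < 1, the function G(c) = c − (3c − 1/2)·ln c + (4c − 1)^{3/2}·(arctan(√(4c − 1)) − π/3) has derivative at c equal to −3·ln c + 2·√(4c − 1)·(3·arctan(√(4c − 1)) − π). Consequently the probability density function of the area ratio Q on (1/4, 1) is PDF(c) = −3·ln c + 2·√(4c − 1)·(3·arctan(√(4c − 1)) − π). -/

import Mathlib

open Real

/-- For `1/4 < c < 1`, the CDF branch
`G(c) = c − (3c − 1/2)·ln c + (4c − 1)^{3/2}·(arctan √(4c − 1) − π/3)` has derivative
`−3·ln c + 2·√(4c − 1)·(3·arctan √(4c − 1) − π)`; this is the PDF of the area ratio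
on `(1/4, 1)`. -/
theorem pdf_right (c : ℝ) (hc0 : 1 / 4 < c) (hc : c < 1) :
    HasDerivAt (fun x : ℝ => x - (3 * x - 1 / 2) * Real.log x +
        (4 * x - 1) ^ ((3 : ℝ) / 2) * (Real.arctan (Real.sqrt (4 * x - 1)) - π / 3))
      (-3 * Real.log c +
        2 * Real.sqrt (4 * c - 1) * (3 * Real.arctan (Real.sqrt (4 * c - 1)) - π)) c := by
  have hx0 : (0:ℝ) < c := lt_trans (by norm_num) hc0
  have hu : (0:ℝ) < 4 * c - 1 := by linarith
  have h1 : HasDerivAt (fun x : ℝ => 4 * x - 1) 4 c := by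
    simpa using ((hasDerivAt_id c).const_mul (4:ℝ)).sub_const 1
  have hsqrt : HasDerivAt (fun x : ℝ => Real.sqrt (4 * x - 1))
      (4 / (2 * Real.sqrt (4 * c - 1))) c := h1.sqrt hu.ne'
  have harctan : HasDerivAt (fun x : ℝ => Real.arctan (Real.sqrt (4 * x - 1)))
      (1 / (1 + Real.sqrt (4 * c - 1) ^ 2) * (4 / (2 * Real.sqrt (4 * c - 1)))) c := hsqrt.arctan
  have hrpow : HasDerivAt (fun x : ℝ => (4 * x - 1) ^ ((3:ℝ)/2))
      (4 * ((3:ℝ)/2) * (4 * c - 1) ^ ((3:ℝ)/2 - 1)) c := h1.rpow_const (Or.inl hu.ne')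
  have h3x : HasDerivAt (fun x : ℝ => 3 * x - 1 / 2) 3 c := by
    simpa using ((hasDerivAt_id c).const_mul (3:ℝ)).sub_const (1/2)
  have hlog : HasDerivAt Real.log c⁻¹ c := Real.hasDerivAt_log hx0.ne'
  have hA : HasDerivAt (fun x : ℝ => x - (3 * x - 1 / 2) * Real.log x)
      (1 - (3 * Real.log c + (3 * c - 1 / 2) * c⁻¹)) c :=
    (hasDerivAt_id c).sub (h3x.mul hlog)
  have hB := hrpow.mul (harctan.sub_const (π / 3))
  have htot := hA.add hB
  convert htot using 1
  · rfl
  · rfl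
  · rfl
  have hsq : Real.sqrt (4 * c - 1) ^ 2 = 4 * c - 1 := Real.sq_sqrt hu.le
  have hs0 : Real.sqrt (4 * c - 1) ≠ 0 := (Real.sqrt_pos.mpr hu).ne'
  have e1 : (4 * c - 1) ^ ((3:ℝ)/2 - 1) = Real.sqrt (4 * c - 1) := by
    norm_num [Real.sqrt_eq_rpow]
  have e2 : (4 * c - 1) ^ ((3:ℝ)/2) = (4 * c - 1) * Real.sqrt (4 * c - 1) := by
    rw [show (3:ℝ)/2 = 1 + 1/2 by norm_num, Real.rpow_add hu, Real.rpow_one,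
      Real.sqrt_eq_rpow]
  rw [e1, e2, hsq]
  field_simp
  ring
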